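/- Let ξ₁,…,ξₙ be pairwise distinct real numbers in [−1,1] and let z₁,…,zₙ be pairwise distinct real numbers with z_j > 1 for all j. Then det((ξₗ − z_j)⁻²)_{l,j=1}^n ≠ 0. -/

import Mathlib

open Matrix Polynomial Finset

private lemma neg_of_alt {k : ℕ} {x y : ℝ} (hx : 0 < (-1 : ℝ) ^ k * x)
    (hy : 0 < (-1 : ℝ) ^ (k + 1) * y) : x * y < 0 := by
  have h1 : ((-1 : ℝ) ^ k) * ((-1 : ℝ) ^ k) = 1 := by
    rw [← pow_add, ← two_mul, pow_mul]; norm_num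
  have h2 : (-1 : ℝ) ^ (k + 1) = -((-1 : ℝ) ^ k) := by rw [pow_succ]; ring
  rw [h2] at hy
  have h3 := mul_pos hx hy
  have h4 : ((-1 : ℝ) ^ k * x) * (-((-1 : ℝ) ^ k) * y)
      = -(((-1 : ℝ) ^ k) * ((-1 : ℝ) ^ k) * (x * y)) := by ring
  rw [h4, h1, one_mul] at h3
  linarith

private lemma exists_root_between {p : Polynomial ℝ} {a b : ℝ} (hab : a < b)
    (h : p.eval a * p.eval b < 0) : ∃ c, c ∈ Set.Ioo a b ∧ p.eval c = 0 := by
  have hcont : ContinuousOn (fun x => p.eval x) (Set.Icc a b) :=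
    (Polynomial.continuous p).continuousOn
  have ha : p.eval a ≠ 0 := by intro h0; rw [h0] at h; simp at h
  rcases ha.lt_or_gt with hlt | hgt
  · have hb : 0 < p.eval b := by nlinarith
    obtain ⟨c, hc1, hc2⟩ := intermediate_value_Ioo hab.le hcont
      (Set.mem_Ioo.2 ⟨hlt, hb⟩)
    exact ⟨c, hc1, hc2⟩
  · have hb : p.eval b < 0 := by nlinarith
    obtain ⟨c, hc1, hc2⟩ := intermediate_value_Ioo' hab.le hcont
      (Set.mem_Ioo.2 ⟨hb, hgt⟩)
    exact ⟨c, hc1, hc2⟩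

private lemma det_pos_aux : ∀ (n : ℕ) (ξ z : Fin n → ℝ), StrictMono ξ → StrictAnti z →
    (∀ l j, ξ l < z j) →
    0 < Matrix.det (Matrix.of fun l j : Fin n => ((ξ l - z j) ^ 2)⁻¹) := by
  intro n
  induction n with
  | zero => intro ξ z _ _ _; simp [Matrix.det_fin_zero]
  | succ n ih =>
    intro ξ z hξ hz hlt
    -- the minors (cofactor determinants)
    set Δ : Fin (n + 1) → ℝ := fun j =>
      Matrix.det (Matrix.of fun l k : Fin n =>
        ((ξ (Fin.castSucc l) - z (Fin.succAbove j k)) ^ 2)⁻¹) with hΔdef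
    have hΔ : ∀ j, 0 < Δ j := fun j =>
      ih _ _ (hξ.comp Fin.strictMono_castSucc)
        (hz.comp_strictMono (Fin.strictMono_succAbove j))
        (fun l k => hlt _ _)
    set Co : Fin (n + 1) → ℝ := fun j => (-1) ^ (n + (j : ℕ)) * Δ j with hCo
    set f : ℝ → ℝ := fun t => ∑ j, Co j * ((t - z j) ^ 2)⁻¹ with hf
    set ξc : Fin n → ℝ := fun l => ξ (Fin.castSucc l) with hξc
    -- determinant as a function of the last node
    have hdet : ∀ t : ℝ,
        Matrix.det (Matrix.of fun l j : Fin (n + 1) =>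
          (((Fin.snoc ξc t : Fin (n+1) → ℝ) l - z j) ^ 2)⁻¹) = f t := by
      intro t
      rw [Matrix.det_succ_row _ (Fin.last n)]
      refine Finset.sum_congr rfl fun j _ => ?_
      have hsub : (Matrix.of fun l j : Fin (n + 1) =>
          (((Fin.snoc ξc t : Fin (n+1) → ℝ) l - z j) ^ 2)⁻¹).submatrix
            (Fin.last n).succAbove j.succAbove
          = Matrix.of fun l k : Fin n =>
            ((ξ (Fin.castSucc l) - z (Fin.succAbove j k)) ^ 2)⁻¹ := by
        ext l k
        simp [Fin.succAbove_last, hξc]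
      rw [hsub]
      simp only [Matrix.of_apply, Fin.snoc_last, Fin.val_last, hf, hCo]
      ring
    have hMros : ∀ i : Fin n, f (ξ (Fin.castSucc i)) = 0 := by
      intro i
      rw [← hdet]
      refine Matrix.det_zero_of_row_eq (i := Fin.castSucc i) (j := Fin.last n)
        (Fin.castSucc_lt_last i).ne ?_
      funext j
      simp [hξc]
    -- the numerator polynomial
    set Q : Polynomial ℝ :=
      ∑ j : Fin (n + 1), Polynomial.C (Co j) *
        ∏ k ∈ Finset.univ.erase j, (X - Polynomial.C (z k)) ^ 2 with hQ
    have hmon : ∀ j : Fin (n + 1),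
        (∏ k ∈ Finset.univ.erase j, (X - Polynomial.C (z k)) ^ 2 : Polynomial ℝ).Monic :=
      fun j => monic_prod_of_monic _ _ fun k _ => (monic_X_sub_C (z k)).pow 2
    have hdegprod : ∀ j : Fin (n + 1),
        (∏ k ∈ Finset.univ.erase j, (X - Polynomial.C (z k)) ^ 2 : Polynomial ℝ).natDegree
          = 2 * n := by
      intro j
      rw [natDegree_prod _ _ fun k _ => pow_ne_zero _ (X_sub_C_ne_zero _)]
      simp only [natDegree_pow, natDegree_X_sub_C, mul_one, Finset.sum_const, smul_eq_mul,
        Finset.card_erase_of_mem (Finset.mem_univ j), Finset.card_univ, Fintype.card_fin]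
      omega
    have hQeval : ∀ t : ℝ, (∀ j, t ≠ z j) →
        Q.eval t = f t * ∏ j, (t - z j) ^ 2 := by
      intro t ht
      rw [hQ, hf]
      simp only [eval_finset_sum, eval_mul, eval_C, eval_prod, eval_pow, eval_sub, eval_X]
      rw [Finset.sum_mul]
      refine Finset.sum_congr rfl fun j _ => ?_
      have hne : (t - z j) ^ 2 ≠ 0 := pow_ne_zero _ (sub_ne_zero.2 (ht j))
      rw [← Finset.mul_prod_erase Finset.univ (fun k => (t - z k) ^ 2) (Finset.mem_univ j)]
      have hne' : t - z j ≠ 0 := sub_ne_zero.2 (ht j)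
      field_simp
    have hQz : ∀ j : Fin (n + 1),
        Q.eval (z j) = Co j * ∏ k ∈ Finset.univ.erase j, (z j - z k) ^ 2 := by
      intro j
      rw [hQ]
      simp only [eval_finset_sum, eval_mul, eval_C, eval_prod, eval_pow, eval_sub, eval_X]
      rw [Finset.sum_eq_single j]
      · intro b _ hbj
        rw [Finset.prod_eq_zero (Finset.mem_erase.2 ⟨Ne.symm hbj, Finset.mem_univ j⟩)
          (by ring), mul_zero]
      · intro h; exact absurd (Finset.mem_univ j) h
    have hQzsign : ∀ j : Fin (n + 1), 0 < (-1 : ℝ) ^ (n + (j : ℕ)) * Q.eval (z j) := by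
      intro j
      rw [hQz j]
      have h1 : 0 < ∏ k ∈ Finset.univ.erase j, (z j - z k) ^ 2 :=
        Finset.prod_pos fun k hk => by
          have hne : z j ≠ z k := fun h => (Finset.mem_erase.1 hk).1
            (hz.injective h.symm)
          have := sub_ne_zero.2 hne
          positivity
      have h2 : ((-1 : ℝ) ^ (n + (j : ℕ))) * ((-1 : ℝ) ^ (n + (j : ℕ))) = 1 := by
        rw [← pow_add, ← two_mul, pow_mul]; norm_num
      have h3 := mul_pos (hΔ j) h1
      calc (0 : ℝ) < Δ j * ∏ k ∈ Finset.univ.erase j, (z j - z k) ^ 2 := h3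
        _ = (-1 : ℝ) ^ (n + (j : ℕ)) *
            (Co j * ∏ k ∈ Finset.univ.erase j, (z j - z k) ^ 2) := by
          rw [hCo]
          calc Δ j * ∏ k ∈ Finset.univ.erase j, (z j - z k) ^ 2
              = (((-1 : ℝ) ^ (n + (j : ℕ))) * ((-1 : ℝ) ^ (n + (j : ℕ)))) *
                (Δ j * ∏ k ∈ Finset.univ.erase j, (z j - z k) ^ 2) := by rw [h2, one_mul]
            _ = (-1 : ℝ) ^ (n + (j : ℕ)) *
                ((-1) ^ (n + (j : ℕ)) * Δ j * ∏ k ∈ Finset.univ.erase j, (z j - z k) ^ 2) := by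
                ring
    -- roots between consecutive poles
    have hgap : ∀ j : Fin n, ∃ c, c ∈ Set.Ioo (z j.succ) (z j.castSucc) ∧ Q.eval c = 0 := by
      intro j
      apply exists_root_between (hz (Fin.castSucc_lt_succ : j.castSucc < j.succ))
      have h1 := hQzsign j.castSucc
      have h2 := hQzsign j.succ
      rw [Fin.coe_castSucc] at h1
      rw [Fin.val_succ, show n + ((j : ℕ) + 1) = (n + (j : ℕ)) + 1 by ring] at h2
      have h3 := neg_of_alt h1 h2
      linarith [mul_comm (Q.eval (z j.castSucc)) (Q.eval (z j.succ))]
    choose w hw1 hw2 using hgap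
    -- all roots
    set r : Fin n ⊕ Fin n → ℝ := Sum.elim (fun i => ξ (Fin.castSucc i)) w with hr
    have hξw : ∀ (i : Fin (n + 1)) (j : Fin n), ξ i < w j :=
      fun i j => (hlt i j.succ).trans (hw1 j).1
    have hwmono : StrictAnti w := by
      intro a b hab
      have hle : (a.succ : Fin (n + 1)) ≤ b.castSucc := by
        rw [Fin.le_def]
        simp only [Fin.val_succ, Fin.coe_castSucc]
        exact hab
      exact ((hw1 b).2.trans_le (hz.antitone hle)).trans (hw1 a).1
    have hrinj : Function.Injective r := by
      rintro (a | a) (b | b) hab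
      · simp only [hr, Sum.elim_inl] at hab
        exact congrArg Sum.inl (Fin.castSucc_injective n (hξ.injective hab))
      · simp only [hr, Sum.elim_inl, Sum.elim_inr] at hab
        exact absurd hab (hξw _ _).ne
      · simp only [hr, Sum.elim_inl, Sum.elim_inr] at hab
        exact absurd hab.symm (hξw _ _).ne
      · simp only [hr, Sum.elim_inr] at hab
        exact congrArg Sum.inr (hwmono.injective hab)
    -- comparison polynomial
    set P : Polynomial ℝ :=
      Polynomial.C (∑ j, Co j) * ∏ a : Fin n ⊕ Fin n, (X - Polynomial.C (r a)) with hP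
    have hQcoeff : Q.coeff (2 * n) = ∑ j, Co j := by
      rw [hQ, finset_sum_coeff]
      refine Finset.sum_congr rfl fun j _ => ?_
      rw [coeff_C_mul,
        show (2 * n) = (∏ k ∈ Finset.univ.erase j,
          (X - Polynomial.C (z k)) ^ 2 : Polynomial ℝ).natDegree from (hdegprod j).symm,
        (hmon j).coeff_natDegree, mul_one]
    have hPmon : (∏ a : Fin n ⊕ Fin n, (X - Polynomial.C (r a)) : Polynomial ℝ).Monic :=
      monic_prod_of_monic _ _ fun a _ => monic_X_sub_C _
    have hPdegp : (∏ a : Fin n ⊕ Fin n, (X - Polynomial.C (r a)) : Polynomial ℝ).natDegree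
        = 2 * n := by
      rw [natDegree_prod _ _ fun a _ => X_sub_C_ne_zero _]
      simp only [natDegree_X_sub_C, Finset.sum_const, smul_eq_mul, mul_one, Finset.card_univ,
        Fintype.card_sum, Fintype.card_fin]
      omega
    have hPcoeff : P.coeff (2 * n) = ∑ j, Co j := by
      rw [hP, coeff_C_mul, show (2 * n) = (∏ a : Fin n ⊕ Fin n,
        (X - Polynomial.C (r a)) : Polynomial ℝ).natDegree from hPdegp.symm,
        hPmon.coeff_natDegree, mul_one]
    have hQroot : ∀ a : Fin n ⊕ Fin n, Q.eval (r a) = 0 := by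
      rintro (i | j)
      · have hne : ∀ j, ξ (Fin.castSucc i) ≠ z j := fun j => (hlt _ j).ne
        simp only [hr, Sum.elim_inl]
        rw [hQeval _ hne, hMros i, zero_mul]
      · simpa [hr] using hw2 j
    have hProot : ∀ a : Fin n ⊕ Fin n, P.eval (r a) = 0 := by
      intro a
      rw [hP, eval_mul, eval_prod, Finset.prod_eq_zero (Finset.mem_univ a) (by simp), mul_zero]
    have hQP : Q = P := by
      by_cases h0 : Q - P = 0
      · exact sub_eq_zero.1 h0
      · exfalso
        apply h0
        have hdegQ : Q.natDegree ≤ 2 * n := by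
          rw [hQ]
          exact natDegree_sum_le_of_forall_le _ _ fun j _ =>
            (natDegree_C_mul_le _ _).trans (le_of_eq (hdegprod j))
        have hdegP : P.natDegree ≤ 2 * n := by
          rw [hP]
          exact (natDegree_C_mul_le _ _).trans (le_of_eq hPdegp)
        have hdegD : (Q - P).natDegree ≤ 2 * n :=
          (natDegree_sub_le _ _).trans (max_le hdegQ hdegP)
        have hcoeff : (Q - P).coeff (2 * n) = 0 := by
          rw [coeff_sub, hQcoeff, hPcoeff, sub_self]
        have hne2 : (Q - P).natDegree ≠ 2 * n := by
          intro h
          rw [← h] at hcoeff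
          exact (leadingCoeff_ne_zero.2 h0) hcoeff
        have hlt2 : (Q - P).natDegree < 2 * n := lt_of_le_of_ne hdegD hne2
        refine Polynomial.eq_zero_of_natDegree_lt_card_of_eval_eq_zero (Q - P) hrinj
          (fun a => by rw [eval_sub, hQroot a, hProot a, sub_self]) ?_
        calc (Q - P).natDegree < 2 * n := hlt2
          _ = Fintype.card (Fin n ⊕ Fin n) := by simp [Fintype.card_sum]; omega
    -- the sign of the leading coefficient
    have hco : 0 < (-1 : ℝ) ^ n * (∑ j, Co j) := by
      have h1 := hQzsign 0
      simp only [Fin.val_zero, Nat.add_zero] at h1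
      have h3 : 0 < ∏ a : Fin n ⊕ Fin n, (z 0 - r a) := by
        refine Finset.prod_pos fun a _ => ?_
        rcases a with i | j
        · simpa [hr] using sub_pos.2 (hlt (Fin.castSucc i) 0)
        · have hwz : w j < z 0 := (hw1 j).2.trans_le (hz.antitone (Fin.zero_le _))
          simpa [hr] using sub_pos.2 hwz
      have h2 : Q.eval (z 0) = (∑ j, Co j) * ∏ a : Fin n ⊕ Fin n, (z 0 - r a) := by
        rw [hQP, hP]
        simp only [eval_mul, eval_C, eval_prod, eval_sub, eval_X]
      rw [h2] at h1
      nlinarith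
    -- assemble
    have hMeq : (Matrix.of fun l j : Fin (n + 1) => ((ξ l - z j) ^ 2)⁻¹)
        = Matrix.of fun l j => (((Fin.snoc ξc (ξ (Fin.last n)) : Fin (n+1) → ℝ) l - z j) ^ 2)⁻¹ := by
      have hsn : (Fin.snoc ξc (ξ (Fin.last n)) : Fin (n+1) → ℝ) = ξ := by
        funext l
        refine Fin.lastCases ?_ (fun i => ?_) l
        · simp
        · simp [hξc]
      rw [hsn]
    rw [hMeq, hdet (ξ (Fin.last n))]
    have ht0ne : ∀ j, ξ (Fin.last n) ≠ z j := fun j => (hlt _ j).ne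
    have hprodpos : 0 < ∏ j, (ξ (Fin.last n) - z j) ^ 2 :=
      Finset.prod_pos fun j _ => by
        have := sub_ne_zero.2 (ht0ne j); positivity
    have hBw : ∏ j : Fin n, (ξ (Fin.last n) - w j)
        = (-1 : ℝ) ^ n * ∏ j : Fin n, (w j - ξ (Fin.last n)) := by
      calc ∏ j : Fin n, (ξ (Fin.last n) - w j)
          = ∏ j : Fin n, (-1) * (w j - ξ (Fin.last n)) := by
            refine Finset.prod_congr rfl fun j _ => by ring
        _ = (-1 : ℝ) ^ n * ∏ j : Fin n, (w j - ξ (Fin.last n)) := by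
            rw [Finset.prod_mul_distrib, Finset.prod_const, Finset.card_univ, Fintype.card_fin]
    have hQt0 : Q.eval (ξ (Fin.last n)) = (∑ j, Co j) *
        ((∏ i : Fin n, (ξ (Fin.last n) - ξ (Fin.castSucc i))) *
          ((-1 : ℝ) ^ n * ∏ j : Fin n, (w j - ξ (Fin.last n)))) := by
      rw [hQP, hP]
      simp only [eval_mul, eval_C, eval_prod, eval_sub, eval_X]
      rw [Fintype.prod_sum_type]
      simp only [hr, Sum.elim_inl, Sum.elim_inr]
      rw [hBw]
    have hft0 : f (ξ (Fin.last n))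
        = Q.eval (ξ (Fin.last n)) * (∏ j, (ξ (Fin.last n) - z j) ^ 2)⁻¹ := by
      rw [hQeval _ ht0ne, mul_assoc, mul_inv_cancel₀ (ne_of_gt hprodpos), mul_one]
    rw [hft0, hQt0]
    have hA : 0 < ∏ i : Fin n, (ξ (Fin.last n) - ξ (Fin.castSucc i)) :=
      Finset.prod_pos fun i _ => sub_pos.2 (hξ (Fin.castSucc_lt_last i))
    have hB : 0 < ∏ j : Fin n, (w j - ξ (Fin.last n)) :=
      Finset.prod_pos fun j _ => sub_pos.2 (hξw (Fin.last n) j)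
    have hinv : 0 < (∏ j, (ξ (Fin.last n) - z j) ^ 2)⁻¹ := inv_pos.2 hprodpos
    nlinarith [mul_pos (mul_pos (mul_pos hco hA) hB) hinv]

private lemma exists_perm_comp_strictMono {n : ℕ} (g : Fin n → ℝ)
    (hg : Function.Injective g) : ∃ σ : Equiv.Perm (Fin n), StrictMono (g ∘ σ) :=
  ⟨Tuple.sort g, (Tuple.monotone_sort g).strictMono_of_injective
    (hg.comp (Tuple.sort g).injective)⟩

/-- Nonvanishing of the determinant `det((ξ_l - z_j)⁻²)` for distinct nodes
`ξ_l ∈ [-1,1]` and distinct poles `z_j > 1`. -/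
theorem det_inv_sq_ne_zero (n : ℕ) (ξ z : Fin n → ℝ)
    (hξ : Function.Injective ξ) (hz : Function.Injective z)
    (hξmem : ∀ l, ξ l ∈ Set.Icc (-1 : ℝ) 1) (hzgt : ∀ j, 1 < z j) :
    Matrix.det (Matrix.of fun l j : Fin n => ((ξ l - z j) ^ 2)⁻¹) ≠ 0 := by
  obtain ⟨σ, hσ⟩ := exists_perm_comp_strictMono ξ hξ
  obtain ⟨τ, hτ⟩ := exists_perm_comp_strictMono z hz
  set q : Equiv.Perm (Fin n) := (Fin.revPerm : Equiv.Perm (Fin n)).trans τ with hq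
  have hzanti : StrictAnti (z ∘ q) := by
    intro a b hab
    exact hτ (by simpa using Fin.rev_lt_rev.2 hab)
  have hltall : ∀ l j, (ξ ∘ σ) l < (z ∘ q) j := fun l j =>
    lt_of_le_of_lt (hξmem (σ l)).2 (hzgt (q j))
  have hpos := det_pos_aux n (ξ ∘ σ) (z ∘ q) hσ hzanti hltall
  have hsub : (Matrix.of fun l j : Fin n => ((ξ l - z j) ^ 2)⁻¹)
      = ((Matrix.of fun l j : Fin n => (((ξ ∘ σ) l - (z ∘ q) j) ^ 2)⁻¹).submatrix
          σ.symm q.symm) := by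
    ext l j
    simp [Matrix.submatrix_apply]
  rw [hsub]
  have h1 : ((Matrix.of fun l j : Fin n => (((ξ ∘ σ) l - (z ∘ q) j) ^ 2)⁻¹).submatrix
      σ.symm q.symm)
      = ((Matrix.of fun l j : Fin n => (((ξ ∘ σ) l - (z ∘ q) j) ^ 2)⁻¹).submatrix
          σ.symm id).submatrix id q.symm := by
    ext l j; simp
  rw [h1, Matrix.det_permute' q.symm, Matrix.det_permute σ.symm]
  have hs1 : ((Equiv.Perm.sign σ.symm : ℤ) : ℝ) ≠ 0 := by
    rcases Int.units_eq_one_or (Equiv.Perm.sign σ.symm) with h | h <;> simp [h]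
  have hs2 : ((Equiv.Perm.sign q.symm : ℤ) : ℝ) ≠ 0 := by
    rcases Int.units_eq_one_or (Equiv.Perm.sign q.symm) with h | h <;> simp [h]
  exact mul_ne_zero hs2 (mul_ne_zero hs1 (ne_of_gt hpos))
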